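/- Let F be a self-similar set in ℝ^d, attractor of an IFS of contracting similarities {S_i}_{i∈I}, not contained in any (d−1)-dimensional hyperplane. Let (Φ_k) be a sequence of affine maps on ℝ^d such that 0 < ‖Φ_k‖_∞ → 0 as k → ∞, where ‖·‖_∞ is the supremum norm over [0,1]^d. Then there exist ρ > 0, a finite word γ ∈ I*, a point a ∈ ℝ^d with S_γ(a) = a, and a subsequence (k_j) such that for every j: sup{‖Φ_{k_j}(x)‖ : x ∈ B(a,ρ)} ≤ 3 · inf{‖Φ_{k_j}(x)‖ : x ∈ B(a,ρ)} and ρ‖DΦ_{k_j}‖ ≤ ‖Φ_{k_j}(a)‖, where DΦ_k denotes the (constant) linear part of Φ_k and ‖DΦ_k‖ its operator norm. -/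

import Mathlib

open Set Metric Filter Function

/-- The composition `S_{i₁} ∘ ⋯ ∘ S_{i_k}` associated to a finite word. -/
def wordMap {ι X : Type*} (S : ι → X → X) : List ι → X → X
  | [] => id
  | i :: w => S i ∘ wordMap S w

lemma wordMap_append {ι X : Type*} (S : ι → X → X) (w₁ w₂ : List ι) :
    wordMap S (w₁ ++ w₂) = wordMap S w₁ ∘ wordMap S w₂ := by
  induction w₁ with
  | nil => rfl
  | cons i w ih => simp [wordMap, ih]; rfl

lemma wordMap_dist {ι X : Type*} [PseudoMetricSpace X] (S : ι → X → X) (c : ι → ℝ)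
    (hsim : ∀ i x y, dist (S i x) (S i y) = c i * dist x y) :
    ∀ (w : List ι) (x y : X),
      dist (wordMap S w x) (wordMap S w y) = (w.map c).prod * dist x y := by
  intro w
  induction w with
  | nil => simp [wordMap]
  | cons i w ih =>
    intro x y
    simp only [wordMap, Function.comp_apply, List.map_cons, List.prod_cons]
    rw [hsim, ih]; ring

lemma wordMap_prod_le {ι : Type*} (c : ι → ℝ) (cm : ℝ) (h0 : ∀ i, 0 ≤ c i)
    (hcm : 0 ≤ cm) (hle : ∀ i, c i ≤ cm) :
    ∀ w : List ι, 0 ≤ (w.map c).prod ∧ (w.map c).prod ≤ cm ^ w.length := by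
  intro w
  induction w with
  | nil => simp
  | cons i w ih =>
    simp only [List.map_cons, List.prod_cons, List.length_cons]
    constructor
    · exact mul_nonneg (h0 i) ih.1
    · calc c i * (w.map c).prod ≤ cm * cm ^ w.length :=
          mul_le_mul (hle i) ih.2 ih.1 hcm
        _ = cm ^ (w.length + 1) := by ring

lemma exists_fixedPoint_near {X ι : Type*} [Fintype ι] [Nonempty ι]
    [MetricSpace X] [CompleteSpace X]
    (S : ι → X → X) (c : ι → ℝ)
    (hc : ∀ i, c i ∈ Set.Ioo (0 : ℝ) 1)
    (hsim : ∀ i x y, dist (S i x) (S i y) = c i * dist x y)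
    (F : Set X) (hFcomp : IsCompact F)
    (hFattr : F = ⋃ i, S i '' F)
    (p : X) (hp : p ∈ F) (ε : ℝ) (hε : 0 < ε) :
    ∃ γ : List ι, γ ≠ [] ∧ ∃ a : X, wordMap S γ a = a ∧ dist a p < ε := by
  haveI : Nonempty X := ⟨p⟩
  -- bound on distances within F
  obtain ⟨D, hD⟩ := Metric.isBounded_iff.mp hFcomp.isBounded
  have hD0 : 0 ≤ D := le_trans dist_nonneg (hD hp hp)
  -- max contraction ratio
  obtain ⟨i₀, -, hmax⟩ := Finset.exists_max_image Finset.univ c ⟨Classical.arbitrary ι, Finset.mem_univ _⟩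
  set cm := c i₀ with hcm
  have hcm0 : 0 ≤ cm := (hc i₀).1.le
  have hcm1 : cm < 1 := (hc i₀).2
  have hcmle : ∀ i, c i ≤ cm := fun i => hmax i (Finset.mem_univ i)
  -- coding
  have hstep : ∀ q : F, ∃ y : ι × F, S y.1 y.2 = (q : X) := by
    rintro ⟨q, hq⟩
    rw [hFattr] at hq
    obtain ⟨i, x, hx, hSx⟩ := Set.mem_iUnion.mp hq |>.imp (fun i h => h) |> id
    · exact ⟨⟨i, ⟨x, hx⟩⟩, hSx⟩
  choose nxt hnxt using hstep
  let seq : ℕ → F := fun n => Nat.rec ⟨p, hp⟩ (fun _ q => (nxt q).2) n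
  have hseq : ∀ n, seq (n + 1) = (nxt (seq n)).2 := fun n => rfl
  let γ : ℕ → List ι := fun n => (List.range n).map (fun j => (nxt (seq j)).1)
  have hγlen : ∀ n, (γ n).length = n := fun n => by simp [γ]
  have key : ∀ n, wordMap S (γ n) (seq n).1 = p := by
    intro n
    induction n with
    | zero => rfl
    | succ n ih =>
      have : γ (n + 1) = γ n ++ [(nxt (seq n)).1] := by
        simp [γ, List.range_succ]
      rw [this, wordMap_append]
      have h5 : wordMap S [(nxt (seq n)).1] (seq (n+1)).1 = (seq n).1 := by
        simp only [wordMap, Function.comp_apply, id_eq]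
        rw [hseq]; exact hnxt (seq n)
      simpa [Function.comp, h5] using ih
  -- choose n large
  have hpow : Tendsto (fun n => cm ^ n) atTop (nhds 0) :=
    tendsto_pow_atTop_nhds_zero_of_lt_one hcm0 hcm1
  have hposmin : (0:ℝ) < min (1/2) (ε / (2 * (D + 1))) := by
    apply lt_min (by norm_num)
    positivity
  obtain ⟨n₀, hn₀⟩ := (Metric.tendsto_atTop.mp hpow (min (1/2) (ε / (2 * (D + 1)))) hposmin)
  set n := max 1 n₀ with hn
  have hn1 : 1 ≤ n := le_max_left _ _
  have hcmn : cm ^ n < min (1/2) (ε / (2 * (D + 1))) := by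
    have := hn₀ n (le_max_right _ _)
    rwa [Real.dist_eq, sub_zero, abs_of_nonneg (pow_nonneg hcm0 n)] at this
  set w := γ n with hw
  set L := (w.map c).prod with hL
  obtain ⟨hL0, hLle⟩ := wordMap_prod_le c cm (fun i => (hc i).1.le) hcm0 hcmle w
  rw [hγlen n] at hLle
  have hLhalf : L ≤ 1/2 := le_trans hLle (le_of_lt (lt_of_lt_of_le hcmn (min_le_left _ _)))
  have hLeps : L ≤ ε / (2 * (D + 1)) := le_trans hLle (le_of_lt (lt_of_lt_of_le hcmn (min_le_right _ _)))
  have hL1 : L < 1 := lt_of_le_of_lt hLhalf (by norm_num)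
  -- contraction
  have hlip : LipschitzWith L.toNNReal (wordMap S w) := by
    apply LipschitzWith.of_dist_le_mul
    intro x y
    rw [wordMap_dist S c hsim w x y]
    rw [Real.coe_toNNReal L hL0]
  have hcontr : ContractingWith L.toNNReal (wordMap S w) := by
    constructor
    · rwa [← NNReal.coe_lt_one, Real.coe_toNNReal L hL0]
    · exact hlip
  set a := hcontr.fixedPoint (wordMap S w) with ha
  have hfix : wordMap S w a = a := hcontr.fixedPoint_isFixedPt
  refine ⟨w, ?_, a, hfix, ?_⟩
  · intro h
    have := hγlen n
    rw [← hw, h] at this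
    simp at this
    omega
  · -- distance estimate
    have h1 : dist a p = L * dist a (seq n).1 := by
      conv_lhs => rw [← hfix, ← key n]
      exact wordMap_dist S c hsim w a (seq n).1
    have h2 : dist a (seq n).1 ≤ dist a p + dist p (seq n).1 := dist_triangle _ _ _
    have h3 : dist p (seq n).1 ≤ D := hD hp (seq n).2
    have hdap : dist a p ≤ L * (dist a p + D) := by
      rw [h1]
      have := dist_nonneg (x := a) (y := (seq n).1)
      nlinarith [dist_nonneg (x := a) (y := (seq n).1)]
    have h2D : (0:ℝ) < 2*(D+1) := by positivity
    have hLe2 : L * (2*(D+1)) ≤ ε := (le_div_iff₀ h2D).mp hLeps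
    have hLd : L * dist a p ≤ (1/2) * dist a p :=
      mul_le_mul_of_nonneg_right hLhalf dist_nonneg
    nlinarith [hdap, hLd, hLe2, hε, hL0, hD0, dist_nonneg (x := a) (y := p),
      mul_nonneg hL0 hD0, mul_nonneg hL0 (dist_nonneg (x := a) (y := p))]

set_option maxHeartbeats 1000000 in
set_option synthInstance.maxHeartbeats 200000 in
/-- **Localisation lemma.**  Let `F` be a self-similar set in `ℝ^d`, attractor of an IFS
of contracting similarities, not contained in any `(d-1)`-dimensional hyperplane.  Let
`Φ k x = A k x + bv k` be affine maps with `0 < ‖Φ k‖_∞ → 0` (supremum over `[0,1]^d`).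
Then there are `ρ > 0`, a nonempty word `γ`, a point `a` with `S_γ(a) = a`, and a
subsequence `k ∘ φ` along which
`sup_{x ∈ B(a,ρ)} ‖Φ x‖ ≤ 3 inf_{x ∈ B(a,ρ)} ‖Φ x‖` and `ρ ‖DΦ‖ ≤ ‖Φ(a)‖`. -/
theorem affine_localisation_lemma {d : ℕ} {ι : Type} [Fintype ι] [Nonempty ι]
    (S : ι → EuclideanSpace ℝ (Fin d) → EuclideanSpace ℝ (Fin d)) (c : ι → ℝ)
    (hc : ∀ i, c i ∈ Set.Ioo (0 : ℝ) 1)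
    (hsim : ∀ i x y, dist (S i x) (S i y) = c i * dist x y)
    (F : Set (EuclideanSpace ℝ (Fin d))) (hFcomp : IsCompact F) (hFne : F.Nonempty)
    (hFattr : F = ⋃ i, S i '' F)
    (hFspan : affineSpan ℝ F = ⊤)
    (A : ℕ → EuclideanSpace ℝ (Fin d) →L[ℝ] EuclideanSpace ℝ (Fin d))
    (bv : ℕ → EuclideanSpace ℝ (Fin d))
    (hnz : ∀ k, ∃ x : EuclideanSpace ℝ (Fin d),
      (∀ i, x i ∈ Set.Icc (0 : ℝ) 1) ∧ A k x + bv k ≠ 0)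
    (hto0 : Tendsto (fun k => ⨆ x : {x : EuclideanSpace ℝ (Fin d) | ∀ i, x i ∈ Set.Icc (0 : ℝ) 1},
        ‖A k (x : EuclideanSpace ℝ (Fin d)) + bv k‖) atTop (nhds 0)) :
    ∃ ρ : ℝ, 0 < ρ ∧ ∃ γ : List ι, γ ≠ [] ∧ ∃ a : EuclideanSpace ℝ (Fin d),
      wordMap S γ a = a ∧ ∃ φ : ℕ → ℕ, StrictMono φ ∧ ∀ j : ℕ,
        ((⨆ x : Metric.ball a ρ, ‖A (φ j) (x : EuclideanSpace ℝ (Fin d)) + bv (φ j)‖) ≤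
          3 * ⨅ x : Metric.ball a ρ, ‖A (φ j) (x : EuclideanSpace ℝ (Fin d)) + bv (φ j)‖) ∧
        ρ * ‖A (φ j)‖ ≤ ‖A (φ j) a + bv (φ j)‖ := by
  classical
  set m : ℕ → ℝ := fun k => max ‖A k‖ ‖bv k‖ with hm_def
  have hm : ∀ k, 0 < m k := by
    intro k
    rcases lt_or_ge 0 (m k) with h | h
    · exact h
    · exfalso
      have hA0 : ‖A k‖ = 0 := le_antisymm (le_trans (le_max_left _ _) h) (norm_nonneg _)
      have hb0 : ‖bv k‖ = 0 := le_antisymm (le_trans (le_max_right _ _) h) (norm_nonneg _)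
      obtain ⟨x, -, hne⟩ := hnz k
      apply hne
      rw [norm_eq_zero] at hA0 hb0
      simp [hA0, hb0]
  set u : ℕ → (EuclideanSpace ℝ (Fin d) →L[ℝ] EuclideanSpace ℝ (Fin d)) ×
      EuclideanSpace ℝ (Fin d) := fun k => ((m k)⁻¹ • A k, (m k)⁻¹ • bv k) with hu_def
  have humem : ∀ k, u k ∈ sphere (0 : (EuclideanSpace ℝ (Fin d) →L[ℝ] EuclideanSpace ℝ (Fin d)) ×
      EuclideanSpace ℝ (Fin d)) 1 := by
    intro k
    rw [mem_sphere_zero_iff_norm]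
    have hsm1 : ‖(m k)⁻¹ • A k‖ = (m k)⁻¹ * ‖A k‖ := by
      have h2 := norm_smul (m k)⁻¹ (A k)
      rwa [Real.norm_eq_abs, abs_of_pos (inv_pos.2 (hm k))] at h2
    have hsm2 : ‖(m k)⁻¹ • bv k‖ = (m k)⁻¹ * ‖bv k‖ := by
      have h2 := norm_smul (m k)⁻¹ (bv k)
      rwa [Real.norm_eq_abs, abs_of_pos (inv_pos.2 (hm k))] at h2
    have h1 : ‖u k‖ = max ((m k)⁻¹ * ‖A k‖) ((m k)⁻¹ * ‖bv k‖) := by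
      rw [Prod.norm_def, hu_def]
      rw [show ((fun k => ((m k)⁻¹ • A k, (m k)⁻¹ • bv k)) k).1 = (m k)⁻¹ • A k from rfl,
        show ((fun k => ((m k)⁻¹ • A k, (m k)⁻¹ • bv k)) k).2 = (m k)⁻¹ • bv k from rfl,
        hsm1, hsm2]
    rw [h1, ← mul_max_of_nonneg _ _ (inv_nonneg.2 (hm k).le)]
    exact inv_mul_cancel₀ (hm k).ne'
  obtain ⟨P, hPmem, φ0, hφ0, hconv⟩ :=
    (isCompact_sphere (0 : (EuclideanSpace ℝ (Fin d) →L[ℝ] EuclideanSpace ℝ (Fin d)) ×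
      EuclideanSpace ℝ (Fin d)) 1).tendsto_subseq humem
  have hPnorm : ‖P‖ = 1 := mem_sphere_zero_iff_norm.mp hPmem
  -- the limit affine map does not vanish on all of F
  have hPne : ∃ p ∈ F, P.1 p + P.2 ≠ 0 := by
    by_contra h
    push_neg at h
    have htop : vectorSpan ℝ F = ⊤ := by
      exact AffineSubspace.vectorSpan_eq_top_of_affineSpan_eq_top ℝ _ _ hFspan
    have hA0 : ∀ x : EuclideanSpace ℝ (Fin d), P.1 x = 0 := by
      have hle : vectorSpan ℝ F ≤ LinearMap.ker (P.1 : EuclideanSpace ℝ (Fin d) →ₗ[ℝ]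
          EuclideanSpace ℝ (Fin d)) := by
        rw [vectorSpan_def, Submodule.span_le]
        intro v hv
        obtain ⟨x, hx, y, hy, rfl⟩ := Set.mem_vsub.mp hv
        have hx2 : P.1 x = -P.2 := eq_neg_of_add_eq_zero_left (h x hx)
        have hy2 : P.1 y = -P.2 := eq_neg_of_add_eq_zero_left (h y hy)
        simp only [SetLike.mem_coe, LinearMap.mem_ker]
        show P.1 (x -ᵥ y) = 0
        rw [vsub_eq_sub, map_sub, hx2, hy2, sub_self]
      intro x
      have hx : x ∈ vectorSpan ℝ F := htop ▸ Submodule.mem_top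
      exact hle hx
    obtain ⟨p, hp⟩ := hFne
    have hb0 : P.2 = 0 := by
      have h2 := h p hp
      rw [hA0 p, zero_add] at h2
      exact h2
    have hP0 : P = 0 := by
      have h1 : P.1 = 0 := ContinuousLinearMap.ext fun x => hA0 x
      exact Prod.ext h1 hb0
    rw [hP0, norm_zero] at hPnorm
    norm_num at hPnorm
  obtain ⟨p, hpF, hΨp⟩ := hPne
  set rp := ‖P.1 p + P.2‖ with hrp
  have hrp0 : 0 < rp := norm_pos_iff.mpr hΨp
  have hεpos : 0 < rp / (2 * (‖P.1‖ + 1)) := by positivity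
  obtain ⟨γ, hγne, a, hafix, hadist⟩ :=
    exists_fixedPoint_near S c hc hsim F hFcomp hFattr p hpF _ hεpos
  set r := ‖P.1 a + P.2‖ with hr
  have hrlb : rp / 2 ≤ r := by
    have hdiff : ‖(P.1 p + P.2) - (P.1 a + P.2)‖ ≤ rp / 2 := by
      have h1 : (P.1 p + P.2) - (P.1 a + P.2) = P.1 (p - a) := by
        rw [map_sub]; abel
      rw [h1]
      have hP1 : (0:ℝ) < ‖P.1‖ + 1 := by positivity
      calc ‖P.1 (p - a)‖ ≤ ‖P.1‖ * ‖p - a‖ := P.1.le_opNorm _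
        _ ≤ (‖P.1‖ + 1) * ‖p - a‖ := by
            apply mul_le_mul_of_nonneg_right (by linarith) (norm_nonneg _)
        _ ≤ (‖P.1‖ + 1) * (rp / (2 * (‖P.1‖ + 1))) := by
            apply mul_le_mul_of_nonneg_left _ hP1.le
            rw [← dist_eq_norm, dist_comm]
            exact hadist.le
        _ = rp / 2 := by field_simp
    have htri := norm_sub_norm_le (P.1 p + P.2) (P.1 a + P.2)
    rw [← hrp, ← hr] at htri
    linarith
  have hr0 : 0 < r := lt_of_lt_of_le (by positivity) hrlb
  set ρ := r / (4 * (‖P.1‖ + 1)) with hρ_def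
  have hρ : 0 < ρ := by positivity
  have hρA : ρ * (‖P.1‖ + 1) = r / 4 := by
    rw [hρ_def]; field_simp
  have hcont : Continuous fun q : (EuclideanSpace ℝ (Fin d) →L[ℝ] EuclideanSpace ℝ (Fin d)) ×
      EuclideanSpace ℝ (Fin d) => q.1 a + q.2 := by fun_prop
  have htend2 : Tendsto (fun j => ‖(u (φ0 j)).1 a + (u (φ0 j)).2‖) atTop (nhds r) :=
    (hcont.norm.tendsto P).comp hconv
  have htend1 : Tendsto (fun j => ‖(u (φ0 j)).1‖) atTop (nhds ‖P.1‖) :=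
    ((continuous_fst.norm).tendsto P).comp hconv
  have hev : ∀ᶠ j in atTop, ‖(u (φ0 j)).1‖ < ‖P.1‖ + 1 ∧
      7 * r / 8 < ‖(u (φ0 j)).1 a + (u (φ0 j)).2‖ ∧
      ‖(u (φ0 j)).1 a + (u (φ0 j)).2‖ < 9 * r / 8 :=
    (htend1.eventually_lt_const (by linarith)).and
      ((htend2.eventually_const_lt (by linarith)).and
        (htend2.eventually_lt_const (by linarith)))
  obtain ⟨N, hN⟩ := eventually_atTop.mp hev
  have hmono : StrictMono fun j : ℕ => φ0 (j + N) :=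
    fun i j hij => hφ0 (by omega)
  refine ⟨ρ, hρ, γ, hγne, a, hafix, fun j => φ0 (j + N), hmono, ?_⟩
  intro j
  obtain ⟨hα, hβ1, hβ2⟩ := hN (j + N) (by omega)
  set k := φ0 (j + N) with hk
  set α := (u k).1 with hα_def
  set β := (u k).2 with hβ_def
  have hmk := hm k
  have hnorm : ∀ x : EuclideanSpace ℝ (Fin d), ‖A k x + bv k‖ = m k * ‖α x + β‖ := by
    intro x
    have h1 : A k x + bv k = m k • (α x + β) := by
      simp only [hα_def, hβ_def, hu_def, ContinuousLinearMap.coe_smul', Pi.smul_apply,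
        smul_add, smul_smul, mul_inv_cancel₀ hmk.ne', one_smul]
    rw [h1, norm_smul, Real.norm_eq_abs, abs_of_pos hmk]
  have hAknorm : ‖A k‖ = m k * ‖α‖ := by
    have h1 : A k = m k • α := by
      simp only [hα_def, hu_def, smul_smul, mul_inv_cancel₀ hmk.ne', one_smul]
    rw [h1]
    have h2 := norm_smul (m k) α
    rw [Real.norm_eq_abs, abs_of_pos hmk] at h2
    exact h2
  have hball : ∀ x : EuclideanSpace ℝ (Fin d), x ∈ Metric.ball a ρ →
      5 * r / 8 ≤ ‖α x + β‖ ∧ ‖α x + β‖ ≤ 11 * r / 8 := by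
    intro x hx
    have hdiff : ‖(α x + β) - (α a + β)‖ ≤ r / 4 := by
      have h1 : (α x + β) - (α a + β) = α (x - a) := by rw [map_sub]; abel
      rw [h1]
      calc ‖α (x - a)‖ ≤ ‖α‖ * ‖x - a‖ := α.le_opNorm _
        _ ≤ (‖P.1‖ + 1) * ρ := by
            apply mul_le_mul hα.le _ (norm_nonneg _) (by positivity)
            rw [← dist_eq_norm]
            exact (mem_ball.mp hx).le
        _ = r / 4 := by rw [mul_comm]; exact hρA
    have htri1 := norm_sub_norm_le (α x + β) (α a + β)
    have htri2 := norm_sub_norm_le (α a + β) (α x + β)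
    rw [norm_sub_rev (α a + β)] at htri2
    constructor
    · linarith
    · linarith
  haveI hne_ball : Nonempty (Metric.ball a ρ) := ⟨⟨a, mem_ball_self hρ⟩⟩
  constructor
  · apply ciSup_le
    rintro ⟨x, hx⟩
    have hub := (hball x hx).2
    have hinf : m k * (5 * r / 8) ≤
        ⨅ y : Metric.ball a ρ, ‖A k (y : EuclideanSpace ℝ (Fin d)) + bv k‖ := by
      apply le_ciInf
      rintro ⟨y, hy⟩
      rw [hnorm y]
      exact mul_le_mul_of_nonneg_left (hball y hy).1 hmk.le
    calc ‖A k x + bv k‖ = m k * ‖α x + β‖ := hnorm x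
      _ ≤ m k * (11 * r / 8) := mul_le_mul_of_nonneg_left hub hmk.le
      _ ≤ 3 * (m k * (5 * r / 8)) := by nlinarith [hmk.le, hr0.le]
      _ ≤ 3 * ⨅ y : Metric.ball a ρ, ‖A k (y : EuclideanSpace ℝ (Fin d)) + bv k‖ := by
          exact mul_le_mul_of_nonneg_left hinf (by norm_num)
  · rw [hAknorm, hnorm a]
    have h1 : ρ * ‖α‖ ≤ r / 4 := by
      calc ρ * ‖α‖ ≤ ρ * (‖P.1‖ + 1) := mul_le_mul_of_nonneg_left hα.le hρ.le
        _ = r / 4 := hρA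
    have h2 : (7:ℝ) * r / 8 ≤ ‖α a + β‖ := hβ1.le
    nlinarith [hmk.le, hr0.le, norm_nonneg α]
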